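/- Let X₁ ⪯ X₂ ⪯ ⋯ ⪯ X_T be d×d positive definite Hermitian matrices. Then Σ_{t=1}^{T−1} Tr(X_{t+1}^{-1}(X_{t+1} − X_t)) ≤ log det(X_T) − log det(X₁). -/

import Mathlib

open Matrix
open scoped ComplexOrder

lemma trace_eq_sum_eigenvalues' {d : ℕ} {D : Matrix (Fin d) (Fin d) ℂ}
    (hD : D.IsHermitian) : D.trace = ∑ i, (hD.eigenvalues i : ℂ) := by
  exact hD.trace_eq_sum_eigenvalues

open scoped MatrixOrder in
lemma key_step {d : ℕ} {A B : Matrix (Fin d) (Fin d) ℂ} (hA : A.PosDef) (hB : B.PosDef) :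
    (B⁻¹ * (B - A)).trace.re ≤ Real.log B.det.re - Real.log A.det.re := by
  classical
  have hBinv : (B⁻¹).PosDef := hB.inv
  set S := CFC.sqrt (B⁻¹) with hSdef
  have hSps : S.PosSemidef := Matrix.nonneg_iff_posSemidef.mp (CFC.sqrt_nonneg _)
  have hSS : S * S = B⁻¹ := CFC.sqrt_mul_sqrt_self _ hBinv.posSemidef.nonneg
  have hSH : Sᴴ = S := hSps.isHermitian
  set Dm := S * A * S with hDdef
  have hDps : Dm.PosSemidef := by
    have := hA.posSemidef.mul_mul_conjTranspose_same S
    rwa [hSH] at this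
  have hDh : Dm.IsHermitian := hDps.isHermitian
  set μ : Fin d → ℝ := hDh.eigenvalues with hμdef
  have hμnn : ∀ i, 0 ≤ μ i := hDps.eigenvalues_nonneg
  have hAdet : 0 < A.det := hA.det_pos
  have hBdet : 0 < B.det := hB.det_pos
  have hAre : (0:ℝ) < A.det.re := (Complex.lt_def.mp hAdet).1
  have hBre : (0:ℝ) < B.det.re := (Complex.lt_def.mp hBdet).1
  have hAc : A.det = (A.det.re : ℂ) := Complex.ext rfl ((Complex.lt_def.mp hAdet).2.symm)
  have hBc : B.det = (B.det.re : ℂ) := Complex.ext rfl ((Complex.lt_def.mp hBdet).2.symm)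
  have hdetD : Dm.det = ((A.det.re / B.det.re : ℝ) : ℂ) := by
    have h1 : Dm.det = S.det * A.det * S.det := by rw [hDdef, det_mul, det_mul]
    have h2 : S.det * S.det = (B.det)⁻¹ := by
      rw [← det_mul, hSS, det_nonsing_inv, Ring.inverse_eq_inv]
    have h3 : Dm.det = A.det * (B.det)⁻¹ := by
      rw [h1, mul_comm S.det A.det, mul_assoc, h2]
    rw [h3, Complex.ofReal_div, ← hAc, ← hBc, div_eq_mul_inv]
  have hprod : ∏ i, μ i = A.det.re / B.det.re := by
    have h := hDh.det_eq_prod_eigenvalues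
    rw [hdetD] at h
    have h2 : ((A.det.re / B.det.re : ℝ) : ℂ) = ((∏ i, μ i : ℝ) : ℂ) := by
      rw [h]; norm_cast
    exact_mod_cast h2.symm
  have hprodpos : 0 < ∏ i, μ i := hprod ▸ div_pos hAre hBre
  have hμpos : ∀ i, 0 < μ i := by
    intro i
    rcases lt_or_eq_of_le (hμnn i) with h | h
    · exact h
    · exact absurd (Finset.prod_eq_zero (Finset.mem_univ i) h.symm) hprodpos.ne'
  have hBinvB : B⁻¹ * B = 1 := nonsing_inv_mul B hB.det_pos.ne'.isUnit
  have htr : (B⁻¹ * (B - A)).trace = (d : ℂ) - Dm.trace := by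
    rw [Matrix.mul_sub, hBinvB, trace_sub, trace_one]
    congr 1
    · simp
    · rw [hDdef, trace_mul_cycle, ← hSS]
  have htre : (B⁻¹ * (B - A)).trace.re = (d : ℝ) - ∑ i, μ i := by
    rw [htr, trace_eq_sum_eigenvalues' hDh]
    push_cast
    simp [Complex.sub_re, hμdef]
  rw [htre]
  have hlog : Real.log B.det.re - Real.log A.det.re = -Real.log (∏ i, μ i) := by
    rw [hprod, Real.log_div hAre.ne' hBre.ne']
    ring
  rw [hlog, Real.log_prod (fun i _ => (hμpos i).ne'), ← Finset.sum_neg_distrib]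
  have hd : (d : ℝ) = ∑ _i : Fin d, (1 : ℝ) := by simp
  rw [hd, ← Finset.sum_sub_distrib]
  apply Finset.sum_le_sum
  intro i _
  have := Real.log_le_sub_one_of_pos (hμpos i)
  linarith

theorem stmt8 (d T : ℕ) (hT : 1 ≤ T) (X : ℕ → Matrix (Fin d) (Fin d) ℂ)
    (hpd : ∀ t, 1 ≤ t → t ≤ T → (X t).PosDef)
    (hmono : ∀ t, 1 ≤ t → t < T → (X (t + 1) - X t).PosSemidef) :
    ∑ t ∈ Finset.Icc 1 (T - 1), ((X (t + 1))⁻¹ * (X (t + 1) - X t)).trace.re ≤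
      Real.log (X T).det.re - Real.log (X 1).det.re := by
  set g : ℕ → ℝ := fun t => Real.log (X t).det.re with hg
  have key : ∀ t ∈ Finset.Icc 1 (T - 1),
      ((X (t + 1))⁻¹ * (X (t + 1) - X t)).trace.re ≤ g (t + 1) - g t := by
    intro t ht
    obtain ⟨h1, h2⟩ := Finset.mem_Icc.mp ht
    have htT : t < T := lt_of_le_of_lt h2 (Nat.sub_lt (lt_of_lt_of_le Nat.zero_lt_one hT) Nat.one_pos)
    exact key_step (hpd t h1 htT.le) (hpd (t + 1) (le_add_right h1) htT)
  calc ∑ t ∈ Finset.Icc 1 (T - 1), ((X (t + 1))⁻¹ * (X (t + 1) - X t)).trace.re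
      ≤ ∑ t ∈ Finset.Icc 1 (T - 1), (g (t + 1) - g t) := Finset.sum_le_sum key
    _ = g T - g 1 := by
        have hIcc : Finset.Icc 1 (T - 1) = Finset.Ico 1 T := by
          ext x
          simp only [Finset.mem_Icc, Finset.mem_Ico]
          omega
        rw [hIcc, Finset.sum_Ico_eq_sum_range]
        have := Finset.sum_range_sub (fun i => g (i + 1)) (T - 1)
        calc ∑ i ∈ Finset.range (T - 1), (g (1 + i + 1) - g (1 + i))
            = ∑ i ∈ Finset.range (T - 1), (g (i + 1 + 1) - g (i + 1)) := by
              apply Finset.sum_congr rfl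
              intro i _
              rw [add_comm 1 i]
          _ = g (T - 1 + 1) - g (0 + 1) := this
          _ = g T - g 1 := by rw [Nat.sub_add_cancel hT, zero_add]
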